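/- Let G be a connected (2t)-regular simple graph on a finite vertex set V, where t ≥ 1. Then there is an injective group homomorphism from Aut(G) into Aut(𝓜₃(G)), and the order of Aut(𝓜₃(G)) equals (2^t · t!)^{|V|} · |Aut(G)|. -/

import Mathlib

open scoped Classical
set_option linter.unusedSectionVars false
set_option linter.unusedVariables false

/-- A *nut graph*: a finite simple graph on at least 2 vertices whose real adjacency
matrix has nullity (kernel dimension) exactly 1 and such that every nonzero vector in
the kernel of the adjacency matrix has all entries nonzero. -/
def SimpleGraph.IsNut {V : Type*} [Fintype V] (G : SimpleGraph V) : Prop :=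
  2 ≤ Fintype.card V ∧
  Module.finrank ℝ (LinearMap.ker (Matrix.mulVecLin (G.adjMatrix ℝ))) = 1 ∧
  ∀ x : V → ℝ, Matrix.mulVecLin (G.adjMatrix ℝ) x = 0 → x ≠ 0 → ∀ v : V, x v ≠ 0

/-- The automorphism group of a simple graph, realised as the subgroup of the
permutations of the vertex set that preserve adjacency (and non-adjacency). -/
def SimpleGraph.autGroup {V : Type*} (G : SimpleGraph V) : Subgroup (Equiv.Perm V) where
  carrier := { σ | ∀ u v : V, G.Adj (σ u) (σ v) ↔ G.Adj u v }
  mul_mem' := by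
    intro σ τ hσ hτ u v
    simpa [hσ (τ u) (τ v)] using hτ u v
  one_mem' := by intro u v; rfl
  inv_mem' := by
    intro σ hσ u v
    have := hσ (σ⁻¹ u) (σ⁻¹ v)
    simpa using this.symm

/-- The triangle-multiplier graph `𝓜₃(G)`: obtained from `G` by fusing a bouquet of `t`
triangles to every vertex of `G`.  Its vertex set is `V ⊕ (V × Fin t × Fin 2)`; vertex `v`
is joined to the two new vertices `(v, j, 0)` and `(v, j, 1)` of each of its `t` triangles,
and these two are joined to each other. -/
def SimpleGraph.triangleMultiplier {V : Type*} (G : SimpleGraph V) (t : ℕ) :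
    SimpleGraph (V ⊕ V × Fin t × Fin 2) where
  Adj x y :=
    match x, y with
    | Sum.inl u, Sum.inl v => G.Adj u v
    | Sum.inl u, Sum.inr p => u = p.1
    | Sum.inr p, Sum.inl u => u = p.1
    | Sum.inr p, Sum.inr q => p.1 = q.1 ∧ p.2.1 = q.2.1 ∧ p.2.2 ≠ q.2.2
  symm := ⟨by
    rintro (u | p) (v | q) h
    · exact G.adj_symm h
    · exact h
    · exact h
    · exact ⟨h.1.symm, h.2.1.symm, h.2.2.symm⟩⟩
  loopless := ⟨by
    rintro (u | p) h
    · exact G.irrefl h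
    · exact h.2.2 rfl⟩

section Wpart
open Equiv

lemma fin2_ne_iff : ∀ a b : Fin 2, a ≠ b → b = a + 1 := by decide

/-- matching-preserving permutations of `Fin t × Fin 2`. -/
def MatchPres {t : ℕ} (π : Equiv.Perm (Fin t × Fin 2)) : Prop :=
  ∀ p q : Fin t × Fin 2,
    ((π p).1 = (π q).1 ∧ (π p).2 ≠ (π q).2) ↔ (p.1 = q.1 ∧ p.2 ≠ q.2)

def TMW (t : ℕ) : Type _ := {π : Equiv.Perm (Fin t × Fin 2) // MatchPres π}

namespace MatchPres

variable {t : ℕ} {π : Equiv.Perm (Fin t × Fin 2)}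

lemma inv (hπ : MatchPres π) : MatchPres π⁻¹ := by
  intro p q
  have := hπ (π⁻¹ p) (π⁻¹ q)
  simpa using this.symm

lemma fst_apply (hπ : MatchPres π) (j : Fin t) (k k' : Fin 2) :
    (π (j, k)).1 = (π (j, k')).1 := by
  by_cases h : k = k'
  · subst h; rfl
  · exact ((hπ (j, k) (j, k')).mpr ⟨rfl, h⟩).1

lemma snd_apply (hπ : MatchPres π) (j : Fin t) :
    (π (j, 1)).2 = (π (j, 0)).2 + 1 := by
  have h := ((hπ (j, 0) (j, 1)).mpr ⟨rfl, show (0 : Fin 2) ≠ 1 by decide⟩).2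
  exact fin2_ne_iff _ _ h

lemma inv_fst (hπ : MatchPres π) (j : Fin t) (k k' : Fin 2) :
    (π⁻¹ ((π (j, k)).1, k')).1 = j := by
  by_cases h : (π (j, k)).2 = k'
  · have hh : ((π (j, k)).1, k') = π (j, k) := by rw [← h]
    rw [hh, ← Equiv.Perm.mul_apply, inv_mul_cancel, Equiv.Perm.one_apply]
  · have h2 := (hπ.inv (π (j, k)) ((π (j, k)).1, k')).mpr ⟨rfl, h⟩
    rw [← Equiv.Perm.mul_apply, inv_mul_cancel, Equiv.Perm.one_apply] at h2
    exact h2.1.symm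

end MatchPres

def TMWequiv (t : ℕ) : TMW t ≃ (Fin t → Fin 2) × Equiv.Perm (Fin t) where
  toFun π := (fun j => (π.1 (j, 0)).2,
    { toFun := fun j => (π.1 (j, 0)).1
      invFun := fun j => (π.1⁻¹ (j, 0)).1
      left_inv := fun j => π.2.inv_fst j 0 0
      right_inv := fun j => by simpa using π.2.inv.inv_fst j 0 0 })
  invFun x := ⟨Equiv.prodShear x.2 (fun j => Equiv.addLeft (x.1 j)), by
    rintro ⟨p1, p2⟩ ⟨q1, q2⟩
    simp only [Equiv.prodShear, Equiv.coe_fn_mk, Equiv.coe_addLeft,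
      EmbeddingLike.apply_eq_iff_eq]
    constructor
    · rintro ⟨rfl, h2⟩
      exact ⟨rfl, fun hc => h2 (by rw [hc])⟩
    · rintro ⟨rfl, h2⟩
      exact ⟨rfl, fun hc => h2 (by exact add_left_cancel hc)⟩⟩
  left_inv := by
    rintro ⟨π, hπ⟩
    apply Subtype.ext
    apply Equiv.ext
    rintro ⟨j, k⟩
    fin_cases k
    · show ((π (j, 0)).1, (π (j,0)).2 + 0) = π (j, 0)
      simp
    · show ((π (j, 0)).1, (π (j,0)).2 + 1) = π (j, 1)
      rw [← hπ.snd_apply j, hπ.fst_apply j 0 1]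
  right_inv := by
    rintro ⟨ε, τ⟩
    refine Prod.ext (funext fun j => ?_) (Equiv.ext fun j => rfl)
    show ε j + 0 = ε j
    simp

lemma card_TMW (t : ℕ) : Nat.card (TMW t) = 2 ^ t * Nat.factorial t := by
  rw [Nat.card_congr (TMWequiv t), Nat.card_prod, Nat.card_fun]
  simp [Nat.card_eq_fintype_card, Fintype.card_perm]

end Wpart

lemma fin2_ne_iff' : ∀ a b : Fin 2, a ≠ b → b = a + 1 := fin2_ne_iff

section Graph

open Sum

variable {V : Type*} [Fintype V] {G : SimpleGraph V} {t : ℕ}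


@[simp] lemma tm_adj_inl_inl {u v : V} : (G.triangleMultiplier t).Adj (inl u) (inl v) ↔ G.Adj u v := Iff.rfl
@[simp] lemma tm_adj_inl_inr {u : V} {p : V × Fin t × Fin 2} :
    (G.triangleMultiplier t).Adj (inl u) (inr p) ↔ u = p.1 := Iff.rfl
@[simp] lemma tm_adj_inr_inl {u : V} {p : V × Fin t × Fin 2} :
    (G.triangleMultiplier t).Adj (inr p) (inl u) ↔ u = p.1 := Iff.rfl
@[simp] lemma tm_adj_inr_inr {p q : V × Fin t × Fin 2} :
    (G.triangleMultiplier t).Adj (inr p) (inr q) ↔ p.1 = q.1 ∧ p.2.1 = q.2.1 ∧ p.2.2 ≠ q.2.2 := Iff.rfl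

lemma tm_inr_nbr {q : V × Fin t × Fin 2} {x : V ⊕ V × Fin t × Fin 2}
    (h : (G.triangleMultiplier t).Adj (inr q) x) : x = inl q.1 ∨ x = inr (q.1, q.2.1, q.2.2 + 1) := by
  obtain ⟨v, j, k⟩ := q
  rcases x with u | ⟨v', j', k'⟩
  · left; rw [tm_adj_inr_inl] at h; rw [h]
  · right
    obtain ⟨h1, h2, h3⟩ := h
    dsimp at h1 h2 h3 ⊢
    rw [← h1, ← h2, fin2_ne_iff' _ _ h3]

lemma tm_notP (q : V × Fin t × Fin 2) :
    ¬ ∃ a b c, a ≠ b ∧ a ≠ c ∧ b ≠ c ∧ (G.triangleMultiplier t).Adj (inr q) a ∧ (G.triangleMultiplier t).Adj (inr q) b ∧ (G.triangleMultiplier t).Adj (inr q) c := by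
  rintro ⟨a, b, c, hab, hac, hbc, ha, hb, hc⟩
  rcases tm_inr_nbr ha with rfl | rfl <;> rcases tm_inr_nbr hb with rfl | rfl <;>
    rcases tm_inr_nbr hc with rfl | rfl <;> simp_all

lemma tm_P (ht : 1 ≤ t) (hreg : G.IsRegularOfDegree (2 * t)) (v : V) :
    ∃ a b c, a ≠ b ∧ a ≠ c ∧ b ≠ c ∧
      (G.triangleMultiplier t).Adj (inl v) a ∧ (G.triangleMultiplier t).Adj (inl v) b ∧ (G.triangleMultiplier t).Adj (inl v) c := by
  have hd : 0 < G.degree v := by rw [hreg v]; omega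
  obtain ⟨u, hu⟩ := (G.degree_pos_iff_exists_adj v).mp hd
  exact ⟨inl u, inr (v, ⟨0, ht⟩, 0), inr (v, ⟨0, ht⟩, 1),
    by simp, by simp, by simp, hu, rfl, rfl⟩

variable (ht : 1 ≤ t) (hreg : G.IsRegularOfDegree (2 * t))
include ht hreg

lemma sigma_inl {σ : Equiv.Perm (V ⊕ V × Fin t × Fin 2)} (hσ : σ ∈ (G.triangleMultiplier t).autGroup) (v : V) :
    ∃ u, σ (inl v) = inl u := by
  rcases hh : σ (inl v) with u | q
  · exact ⟨u, rfl⟩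
  · exfalso
    obtain ⟨a, b, c, hab, hac, hbc, ha, hb, hc⟩ := tm_P ht hreg v
    refine tm_notP (G := G) q ⟨σ a, σ b, σ c, σ.injective.ne hab, σ.injective.ne hac,
      σ.injective.ne hbc, ?_, ?_, ?_⟩
    · rw [← hh]; exact (hσ (inl v) a).mpr ha
    · rw [← hh]; exact (hσ (inl v) b).mpr hb
    · rw [← hh]; exact (hσ (inl v) c).mpr hc

lemma sigma_inr {σ : Equiv.Perm (V ⊕ V × Fin t × Fin 2)} (hσ : σ ∈ (G.triangleMultiplier t).autGroup)
    (q : V × Fin t × Fin 2) : ∃ r, σ (inr q) = inr r := by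
  rcases hh : σ (inr q) with u | r
  · exfalso
    obtain ⟨w, hw⟩ := sigma_inl ht hreg (Subgroup.inv_mem _ hσ) u
    have h2 : σ⁻¹ (σ (inr q)) = inr q := Equiv.symm_apply_apply σ _
    rw [hh, hw] at h2
    exact (inl_ne_inr h2)
  · exact ⟨r, rfl⟩


def tmTau (σ : Equiv.Perm (V ⊕ V × Fin t × Fin 2)) : V → V :=
  fun v => Sum.elim id Prod.fst (σ (inl v))

def tmPi (σ : Equiv.Perm (V ⊕ V × Fin t × Fin 2)) (v : V) (p : Fin t × Fin 2) :
    Fin t × Fin 2 :=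
  Sum.elim (fun _ => p) (fun r => r.2) (σ (inr (v, p)))

lemma tmTau_spec {σ : Equiv.Perm (V ⊕ V × Fin t × Fin 2)}
    (hσ : σ ∈ (G.triangleMultiplier t).autGroup) (v : V) :
    σ (inl v) = inl (tmTau σ v) := by
  obtain ⟨u, hu⟩ := sigma_inl ht hreg hσ v
  rw [tmTau, hu]
  rfl

lemma tmPi_spec {σ : Equiv.Perm (V ⊕ V × Fin t × Fin 2)}
    (hσ : σ ∈ (G.triangleMultiplier t).autGroup) (v : V) (p : Fin t × Fin 2) :
    σ (inr (v, p)) = inr (tmTau σ v, tmPi σ v p) := by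
  obtain ⟨r, hr⟩ := sigma_inr ht hreg hσ (v, p)
  have hadj : (G.triangleMultiplier t).Adj (σ (inl v)) (σ (inr (v, p))) :=
    (hσ (inl v) (inr (v, p))).mpr rfl
  rw [tmTau_spec ht hreg hσ v, hr, tm_adj_inl_inr] at hadj
  rw [tmPi, hr]
  show inr r = inr (tmTau σ v, r.2)
  rw [hadj]

lemma tmTau_left {σ : Equiv.Perm (V ⊕ V × Fin t × Fin 2)}
    (hσ : σ ∈ (G.triangleMultiplier t).autGroup) (v : V) :
    tmTau σ⁻¹ (tmTau σ v) = v := by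
  have h : σ⁻¹ (σ (inl v)) = inl v := Equiv.symm_apply_apply σ _
  rw [tmTau_spec ht hreg hσ v, tmTau_spec ht hreg (Subgroup.inv_mem _ hσ) (tmTau σ v)] at h
  exact inl_injective h

lemma tmPi_left {σ : Equiv.Perm (V ⊕ V × Fin t × Fin 2)}
    (hσ : σ ∈ (G.triangleMultiplier t).autGroup) (v : V) (p : Fin t × Fin 2) :
    tmPi σ⁻¹ (tmTau σ v) (tmPi σ v p) = p := by
  have h : σ⁻¹ (σ (inr (v, p))) = inr (v, p) := Equiv.symm_apply_apply σ _
  rw [tmPi_spec ht hreg hσ v p,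
    tmPi_spec ht hreg (Subgroup.inv_mem _ hσ) (tmTau σ v) (tmPi σ v p),
    tmTau_left ht hreg hσ v] at h
  have := inr_injective h
  exact congrArg Prod.snd this


omit ht hreg in
lemma matchPres_one : MatchPres (1 : Equiv.Perm (Fin t × Fin 2)) := by
  intro p q; rfl

omit ht hreg in
lemma buildPerm_mem {τ : Equiv.Perm V} (hτ : τ ∈ G.autGroup)
    {π : V → Equiv.Perm (Fin t × Fin 2)} (hπ : ∀ v, MatchPres (π v)) :
    Equiv.sumCongr τ (Equiv.prodShear τ π) ∈ (G.triangleMultiplier t).autGroup := by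
  rintro (u | ⟨u, p⟩) (v | ⟨v, q⟩)
  · exact hτ u v
  · show (τ u = τ v) ↔ (u = v)
    exact ⟨fun h => τ.injective h, fun h => congrArg τ h⟩
  · show (τ v = τ u) ↔ (v = u)
    exact ⟨fun h => τ.injective h, fun h => congrArg τ h⟩
  · show (τ u = τ v ∧ (π u p).1 = (π v q).1 ∧ (π u p).2 ≠ (π v q).2) ↔
      (u = v ∧ p.1 = q.1 ∧ p.2 ≠ q.2)
    constructor
    · rintro ⟨h1, h2⟩
      have huv := τ.injective h1
      subst huv
      exact ⟨rfl, (hπ u p q).mp h2⟩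
    · rintro ⟨rfl, h2⟩
      exact ⟨rfl, (hπ u p q).mpr h2⟩

def tmEquiv (ht : 1 ≤ t) (hreg : G.IsRegularOfDegree (2 * t)) :
    (G.triangleMultiplier t).autGroup ≃ (V → TMW t) × G.autGroup where
  toFun σ :=
    (fun v => ⟨⟨tmPi σ.1 v, tmPi σ.1⁻¹ (tmTau σ.1 v),
        fun p => tmPi_left ht hreg σ.2 v p,
        fun p => by
          have h1 := tmPi_left ht hreg (Subgroup.inv_mem _ σ.2) (tmTau σ.1 v) p
          rw [inv_inv, tmTau_left ht hreg σ.2 v] at h1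
          exact h1⟩, by
      intro p q
      have h := σ.2 (inr (v, p)) (inr (v, q))
      rw [tmPi_spec ht hreg σ.2 v p, tmPi_spec ht hreg σ.2 v q] at h
      simpa using h⟩,
    ⟨⟨tmTau σ.1, tmTau σ.1⁻¹,
        fun v => tmTau_left ht hreg σ.2 v,
        fun v => by
          have h1 := tmTau_left ht hreg (Subgroup.inv_mem _ σ.2) v
          rwa [inv_inv] at h1⟩, by
      intro u v
      have h := σ.2 (inl u) (inl v)
      rw [tmTau_spec ht hreg σ.2 u, tmTau_spec ht hreg σ.2 v] at h
      exact h⟩)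
  invFun w :=
    ⟨Equiv.sumCongr w.2.1 (Equiv.prodShear w.2.1 (fun v => (w.1 v).1)),
      buildPerm_mem w.2.2 (fun v => (w.1 v).2)⟩
  left_inv σ := by
    apply Subtype.ext
    apply Equiv.ext
    rintro (v | ⟨v, p⟩)
    · exact (tmTau_spec ht hreg σ.2 v).symm
    · exact (tmPi_spec ht hreg σ.2 v p).symm
  right_inv w := by
    refine Prod.ext ?_ ?_
    · funext v
      apply Subtype.ext
      apply Equiv.ext
      intro p
      rfl
    · apply Subtype.ext
      apply Equiv.ext
      intro v
      rfl

end Graph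

/-- If `G` is a connected `(2t)`-regular graph with `t ≥ 1` on a finite vertex set `V`,
then `Aut(G)` embeds into `Aut(𝓜₃(G))` and
`|Aut(𝓜₃(G))| = (2^t · t!)^{|V|} · |Aut(G)|`. -/
theorem triangleMultiplier_aut {V : Type*} [Fintype V] (G : SimpleGraph V) (t : ℕ)
    (ht : 1 ≤ t) (hconn : G.Connected) (hreg : G.IsRegularOfDegree (2 * t)) :
    (∃ f : G.autGroup →* (G.triangleMultiplier t).autGroup, Function.Injective f) ∧
    Nat.card (G.triangleMultiplier t).autGroup =
      (2 ^ t * Nat.factorial t) ^ Fintype.card V * Nat.card G.autGroup := by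
  constructor
  · refine ⟨MonoidHom.mk' (fun τ =>
        ⟨Equiv.sumCongr τ.1 (Equiv.prodShear τ.1 (fun _ => (1 : Equiv.Perm (Fin t × Fin 2)))),
          buildPerm_mem τ.2 (fun _ => matchPres_one)⟩) ?_, ?_⟩
    · intro a b
      apply Subtype.ext
      apply Equiv.ext
      rintro (v | ⟨v, p⟩) <;> rfl
    · intro a b h
      apply Subtype.ext
      apply Equiv.ext
      intro v
      have h2 := congrArg (fun g : (G.triangleMultiplier t).autGroup => g.1 (Sum.inl v)) h
      exact Sum.inl_injective h2
  · rw [Nat.card_congr (tmEquiv (G := G) ht hreg), Nat.card_prod, Nat.card_fun,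
      card_TMW, Nat.card_eq_fintype_card]
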